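/- Assume in addition q ≥ 1. Then there exists a constant C > 0 depending only on q such that for every μ ≥ 0 and all θ₁, θ₂ ∈ ℝ one has |ψ_μ(θ₁) − ψ_μ(θ₂)| ≤ C·|θ₁ − θ₂|^(1/q); in particular ψ_μ is (1/q)-Hölder continuous on ℝ. -/
import Mathlib

open Real

noncomputable def g (s q μ ζ : ℝ) : ℝ := μ * |ζ| ^ (s - 1) * ζ + |ζ| ^ (q - 1) * ζ

/-- signed power -/
noncomputable def fpow (p t : ℝ) : ℝ := |t| ^ (p - 1) * t

lemma fpow_nonneg_eq {p t : ℝ} (hp : 0 < p) (ht : 0 ≤ t) : fpow p t = t ^ p := by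
  rcases eq_or_lt_of_le ht with h | h
  · simp [fpow, ← h, Real.zero_rpow hp.ne']
  · rw [fpow, abs_of_pos h, ← Real.rpow_add_one h.ne', sub_add_cancel]

lemma fpow_neg (p t : ℝ) : fpow p (-t) = - fpow p t := by
  simp [fpow]

lemma fpow_mono {p : ℝ} (hp : 0 < p) : Monotone (fpow p) := by
  intro a b hab
  rcases le_total 0 a with ha | ha
  · rw [fpow_nonneg_eq hp ha, fpow_nonneg_eq hp (ha.trans hab)]
    exact Real.rpow_le_rpow ha hab hp.le
  · rcases le_total 0 b with hb | hb
    · have h1 : fpow p a ≤ 0 := by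
        have := fpow_nonneg_eq hp (neg_nonneg.2 ha)
        rw [fpow_neg] at this
        nlinarith [Real.rpow_nonneg (neg_nonneg.2 ha) p]
      have h2 : 0 ≤ fpow p b := by
        rw [fpow_nonneg_eq hp hb]; exact Real.rpow_nonneg hb p
      linarith
    · have : fpow p (-b) ≤ fpow p (-a) := by
        rw [fpow_nonneg_eq hp (neg_nonneg.2 hb), fpow_nonneg_eq hp (neg_nonneg.2 ha)]
        exact Real.rpow_le_rpow (neg_nonneg.2 hb) (by linarith) hp.le
      rw [fpow_neg, fpow_neg] at this
      linarith

lemma superadd {x y p : ℝ} (hx : 0 ≤ x) (hy : 0 ≤ y) (hp : 1 ≤ p) :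
    x ^ p + y ^ p ≤ (x + y) ^ p := by
  have := NNReal.add_rpow_le_rpow_add (⟨x, hx⟩ : NNReal) ⟨y, hy⟩ hp
  exact_mod_cast this

lemma convex2 {x y p : ℝ} (hx : 0 ≤ x) (hy : 0 ≤ y) (hp : 1 ≤ p) :
    (x + y) ^ p ≤ 2 ^ (p - 1) * (x ^ p + y ^ p) := by
  have := NNReal.rpow_add_le_mul_rpow_add_rpow (⟨x, hx⟩ : NNReal) ⟨y, hy⟩ hp
  exact_mod_cast this

/-- Key one-dimensional inequality: (a-b)^q ≤ 2^(q-1) (fpow q a - fpow q b) for b ≤ a, q ≥ 1. -/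
lemma key {q a b : ℝ} (hq : 1 ≤ q) (hab : b ≤ a) :
    (a - b) ^ q ≤ 2 ^ (q - 1) * (fpow q a - fpow q b) := by
  have hq0 : (0:ℝ) < q := lt_of_lt_of_le one_pos hq
  have h2 : (1:ℝ) ≤ 2 ^ (q - 1) := Real.one_le_rpow one_le_two (by linarith)
  rcases le_total 0 b with hb | hb
  · -- 0 ≤ b ≤ a
    have ha : 0 ≤ a := hb.trans hab
    rw [fpow_nonneg_eq hq0 ha, fpow_nonneg_eq hq0 hb]
    have h1 : (a - b) ^ q + b ^ q ≤ a ^ q := by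
      have := superadd (x := a - b) (y := b) (by linarith) hb hq
      simpa using this
    nlinarith [Real.rpow_nonneg (sub_nonneg.2 hab) q]
  · rcases le_total 0 a with ha | ha
    · -- b ≤ 0 ≤ a
      have e1 : fpow q a = a ^ q := fpow_nonneg_eq hq0 ha
      have e2 : fpow q b = -((-b) ^ q) := by
        have h := fpow_neg q (-b); rw [neg_neg] at h
        rw [h, fpow_nonneg_eq hq0 (neg_nonneg.2 hb)]
      rw [e1, e2]
      have := convex2 ha (neg_nonneg.2 hb) hq
      have e3 : a - b = a + -b := by ring
      rw [e3]
      linarith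
    · -- b ≤ a ≤ 0
      have e1 : fpow q a = -((-a) ^ q) := by
        have h := fpow_neg q (-a); rw [neg_neg] at h
        rw [h, fpow_nonneg_eq hq0 (neg_nonneg.2 ha)]
      have e2 : fpow q b = -((-b) ^ q) := by
        have h := fpow_neg q (-b); rw [neg_neg] at h
        rw [h, fpow_nonneg_eq hq0 (neg_nonneg.2 hb)]
      rw [e1, e2]
      have h1 : (-b - -a) ^ q + (-a) ^ q ≤ (-b) ^ q := by
        have := superadd (x := -b - -a) (y := -a) (by linarith) (neg_nonneg.2 ha) hq
        simpa using this
      have e3 : a - b = -b - -a := by ring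
      rw [e3]
      nlinarith [Real.rpow_nonneg (show (0:ℝ) ≤ -b - -a by linarith) q]

theorem stmt_6 (s q : ℝ) (hs : 0 < s) (hsq : s < q) (hq : 1 ≤ q)
    (ψ : ℝ → ℝ → ℝ)
    (hψ_right : ∀ μ : ℝ, 0 ≤ μ → ∀ θ : ℝ, g s q μ (ψ μ θ) = θ)
    (hψ_left : ∀ μ : ℝ, 0 ≤ μ → ∀ ζ : ℝ, ψ μ (g s q μ ζ) = ζ) :
    ∃ C : ℝ, 0 < C ∧ ∀ μ : ℝ, 0 ≤ μ → ∀ θ₁ θ₂ : ℝ,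
      |ψ μ θ₁ - ψ μ θ₂| ≤ C * |θ₁ - θ₂| ^ (1 / q) := by
  have hq0 : (0:ℝ) < q := lt_of_lt_of_le one_pos hq
  refine ⟨2, two_pos, fun μ hμ θ₁ θ₂ => ?_⟩
  -- main estimate for ordered case
  have main : ∀ θ₁ θ₂ : ℝ, ψ μ θ₂ ≤ ψ μ θ₁ →
      ψ μ θ₁ - ψ μ θ₂ ≤ 2 * |θ₁ - θ₂| ^ (1 / q) := by
    intro t1 t2 hord
    set a := ψ μ t1
    set b := ψ μ t2
    have hg : g s q μ a - g s q μ b = t1 - t2 := by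
      rw [hψ_right μ hμ t1, hψ_right μ hμ t2]
    have hsmono : μ * |b| ^ (s - 1) * b ≤ μ * |a| ^ (s - 1) * a := by
      have := fpow_mono hs hord
      unfold fpow at this
      calc μ * |b| ^ (s - 1) * b = μ * (|b| ^ (s - 1) * b) := by ring
        _ ≤ μ * (|a| ^ (s - 1) * a) := by exact mul_le_mul_of_nonneg_left this hμ
        _ = μ * |a| ^ (s - 1) * a := by ring
    have hstep : fpow q a - fpow q b ≤ t1 - t2 := by
      have : g s q μ a - g s q μ b = (μ * |a| ^ (s-1) * a - μ * |b| ^ (s-1) * b) +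
          (fpow q a - fpow q b) := by
        unfold g fpow; ring
      linarith [hg ▸ this]
    have hkey := key hq hord
    have hle : (a - b) ^ q ≤ 2 ^ (q - 1) * |t1 - t2| := by
      calc (a - b) ^ q ≤ 2 ^ (q - 1) * (fpow q a - fpow q b) := hkey
        _ ≤ 2 ^ (q - 1) * |t1 - t2| := by
            refine mul_le_mul_of_nonneg_left ?_ (Real.rpow_nonneg (by norm_num) _)
            exact hstep.trans (le_abs_self _)
    -- take q-th roots
    have hroot : a - b ≤ (2 ^ (q - 1) * |t1 - t2|) ^ (1 / q) := by
      have h1 : ((a - b) ^ q) ^ (1/q) ≤ (2 ^ (q-1) * |t1 - t2|) ^ (1/q) :=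
        Real.rpow_le_rpow (Real.rpow_nonneg (sub_nonneg.2 hord) q) hle
          (by positivity)
      rwa [← Real.rpow_mul (sub_nonneg.2 hord),
        mul_one_div, div_self hq0.ne', Real.rpow_one] at h1
    have hfinal : (2 ^ (q - 1) * |t1 - t2|) ^ (1/q) ≤ 2 * |t1 - t2| ^ (1/q) := by
      have h2b : ((2:ℝ) ^ (q - 1)) ^ (1/q) ≤ 2 := by
        rw [← Real.rpow_mul (by norm_num : (0:ℝ) ≤ 2)]
        calc (2:ℝ) ^ ((q-1)*(1/q)) ≤ 2 ^ (1:ℝ) := by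
              apply Real.rpow_le_rpow_of_exponent_le one_le_two
              rw [mul_one_div, div_le_one hq0]; linarith
          _ = 2 := Real.rpow_one 2
      rw [Real.mul_rpow (by positivity) (abs_nonneg _)]
      exact mul_le_mul_of_nonneg_right h2b (Real.rpow_nonneg (abs_nonneg _) _)
    linarith
  rcases le_total (ψ μ θ₂) (ψ μ θ₁) with h | h
  · rw [abs_of_nonneg (sub_nonneg.2 h)]
    exact main θ₁ θ₂ h
  · rw [abs_of_nonpos (sub_nonneg.2 h |> fun h' => by linarith), abs_sub_comm]
    have := main θ₂ θ₁ h
    linarith
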